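/- In the finite-horizon MDP defined in the context, define the action-value Q_i(s,a) = c(s,a) + K^{−2}·∫ û*_{i+1}(Q(ε − a·p_H^inv(γ_H)·τ + e)) dμ(e) for 1 ≤ i < N and Q_N(s,a) = c(s,a). Fix i ∈ {1,…,N} and a state s = (ε, γ_G, γ_H) with p_H^inv(γ_H) ≤ min(ε/τ, p_H^max) and Q_i(s,1) ≤ Q_i(s,0). Then for all channel states γ_G' ≤ γ_G and γ_H' ≥ γ_H, the state s' = (ε, γ_G', γ_H') satisfies p_H^inv(γ_H') ≤ min(ε/τ, p_H^max) and Q_i(s',1) ≤ Q_i(s',0). -/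

import Mathlib

open MeasureTheory

lemma stmt15_meas_comp {f : ℝ → ℝ} (hf : Measurable f)
    (S : Finset ℝ) (hS : ∀ x, f x ∈ S) (F : ℝ → ℝ) :
    Measurable fun x => F (f x) := by
  classical
  intro t _
  have h : (fun x => F (f x)) ⁻¹' t = f ⁻¹' ↑(S.filter fun v => F v ∈ t) := by
    ext x
    simp [hS x]
  rw [h]
  exact hf (S.filter fun v => F v ∈ t).measurableSet

lemma stmt15_integrable {f : ℝ → ℝ} (hf : Measurable f)
    (S : Finset ℝ) (hS : ∀ x, f x ∈ S) (F : ℝ → ℝ)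
    (μ : Measure ℝ) [IsFiniteMeasure μ] :
    Integrable (fun x => F (f x)) μ := by
  classical
  have hS0 : (S.image fun v => |F v|).Nonempty :=
    ⟨|F (f 0)|, Finset.mem_image_of_mem _ (hS 0)⟩
  set C := (S.image fun v => |F v|).max' hS0 with hC
  refine (integrable_const C).mono' ((stmt15_meas_comp hf S hS F).aestronglyMeasurable) ?_
  filter_upwards with x
  simpa [Real.norm_eq_abs] using
    Finset.le_max' _ _ (Finset.mem_image_of_mem (fun v => |F v|) (hS x))

/-- Combined monotone-structure corollary of Propositions 2 and 3 (justifying the monotone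
backward induction algorithm): if serving with the EH-BS is allowed and optimal at
`(ε, γG, γH)`, it remains allowed and optimal at any state `(ε, γG', γH')` with a worse
G-channel `γG' ≤ γG` and a better H-channel `γH' ≥ γH`. -/
theorem stmt15
    (N M K : ℕ) (hN : 1 ≤ N) (hM : 1 ≤ M) (hK : 1 ≤ K)
    (B τ wG wD CG CH pGmax pHmax : ℝ)
    (hB : 0 < B) (hτ : 0 < τ) (hwG : 0 < wG) (hwD : 0 < wD)
    (hCG : 0 < CG) (hCH : 0 < CH) (hpGmax : 0 < pGmax) (hpHmax : 0 < pHmax)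
    (κ : ℝ) (hκ : κ = min pGmax (wD / (wG * τ)))
    (H : Fin K → ℝ) (hHpos : ∀ k, 0 < H k) (hHmono : StrictMono H)
    (μ : Measure ℝ) [IsProbabilityMeasure μ] (hμ : μ (Set.Iio 0) = 0)
    (Quant : ℝ → ℝ)
    (hQuant : ∀ x, Quant x =
      ((2 * min (⌊(M : ℝ) * min x B / B⌋ + 1) (M : ℤ) - 1 : ℤ) : ℝ) * B / (2 * M))
    (Egrid : Set ℝ)
    (hEgrid : Egrid = {x : ℝ | ∃ m : ℕ, 1 ≤ m ∧ m ≤ M ∧ x = (2 * (m : ℝ) - 1) * B / (2 * M)})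
    (ccost : ℝ → ℝ)
    (hccost : ∀ γ, ccost γ = if κ < CG / γ then wD else wG * τ * (CG / γ))
    (uhat : (ℝ → ℝ → ℝ → ℝ) → ℝ → ℝ)
    (huhat : ∀ g ε, uhat g ε = ∑ kG : Fin K, ∑ kH : Fin K, g ε (H kG) (H kH))
    (ustar : ℕ → ℝ → ℝ → ℝ → ℝ)
    (hterm : ∀ ε γG γH, ustar N ε γG γH =
      if CH / γH ≤ min (ε / τ) pHmax then
        min ((1 - (0 : ℝ)) * ccost γG) ((1 - (1 : ℝ)) * ccost γG)
      else (1 - (0 : ℝ)) * ccost γG)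
    (hbell : ∀ i, 1 ≤ i → i < N → ∀ ε γG γH, ustar i ε γG γH =
      if CH / γH ≤ min (ε / τ) pHmax then
        min ((1 - (0 : ℝ)) * ccost γG + ((K : ℝ) ^ 2)⁻¹ *
              ∫ e, uhat (ustar (i + 1)) (Quant (ε - 0 * (CH / γH) * τ + e)) ∂μ)
            ((1 - (1 : ℝ)) * ccost γG + ((K : ℝ) ^ 2)⁻¹ *
              ∫ e, uhat (ustar (i + 1)) (Quant (ε - 1 * (CH / γH) * τ + e)) ∂μ)
      else (1 - (0 : ℝ)) * ccost γG + ((K : ℝ) ^ 2)⁻¹ *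
              ∫ e, uhat (ustar (i + 1)) (Quant (ε - 0 * (CH / γH) * τ + e)) ∂μ)
    (Qi : ℕ → ℝ → ℝ → ℝ → ℝ → ℝ)
    (hQi : ∀ i, 1 ≤ i → i ≤ N → ∀ ε γG γH a, Qi i ε γG γH a =
      if i = N then (1 - a) * ccost γG
      else (1 - a) * ccost γG + ((K : ℝ) ^ 2)⁻¹ *
            ∫ e, uhat (ustar (i + 1)) (Quant (ε - a * (CH / γH) * τ + e)) ∂μ)
    :
    ∀ i, 1 ≤ i → i ≤ N → ∀ ε ∈ Egrid, ∀ γG ∈ Set.range H, ∀ γH ∈ Set.range H,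
      CH / γH ≤ min (ε / τ) pHmax →
      Qi i ε γG γH 1 ≤ Qi i ε γG γH 0 →
      ∀ γG' ∈ Set.range H, ∀ γH' ∈ Set.range H, γG' ≤ γG → γH ≤ γH' →
        (CH / γH' ≤ min (ε / τ) pHmax ∧
          Qi i ε γG' γH' 1 ≤ Qi i ε γG' γH' 0) := by
  classical
  -- the quantizer is monotone
  have hQmono : Monotone Quant := by
    intro x y hxy
    rw [hQuant x, hQuant y]
    have h1 : ⌊(M : ℝ) * min x B / B⌋ ≤ ⌊(M : ℝ) * min y B / B⌋ := by
      apply Int.floor_le_floor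
      have hm : min x B ≤ min y B := min_le_min hxy le_rfl
      gcongr
    have h2 : (2 * min (⌊(M : ℝ) * min x B / B⌋ + 1) (M : ℤ) - 1 : ℤ)
        ≤ 2 * min (⌊(M : ℝ) * min y B / B⌋ + 1) (M : ℤ) - 1 := by
      have := min_le_min (add_le_add_right h1 1) (le_refl (M : ℤ))
      omega
    have h2' : ((2 * min (⌊(M : ℝ) * min x B / B⌋ + 1) (M : ℤ) - 1 : ℤ) : ℝ)
        ≤ ((2 * min (⌊(M : ℝ) * min y B / B⌋ + 1) (M : ℤ) - 1 : ℤ) : ℝ) := by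
      exact_mod_cast h2
    have hMR : (0 : ℝ) < 2 * (M : ℝ) := by
      have : (0 : ℝ) < (M : ℝ) := by exact_mod_cast hM
      linarith
    exact (div_le_div_iff_of_pos_right hMR).mpr (mul_le_mul_of_nonneg_right h2' hB.le)
  have hQmeas : Measurable Quant := hQmono.measurable
  -- on `[c, ∞)` the quantizer takes values in a finite set
  have hQmem : ∀ c x : ℝ, c ≤ x → Quant x ∈
      (Finset.Icc (min (⌊(M : ℝ) * min c B / B⌋ + 1) (M : ℤ)) (M : ℤ)).image
        (fun n : ℤ => ((2 * n - 1 : ℤ) : ℝ) * B / (2 * M)) := by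
    intro c x hcx
    refine Finset.mem_image.mpr
      ⟨min (⌊(M : ℝ) * min x B / B⌋ + 1) (M : ℤ), ?_, (hQuant x).symm⟩
    refine Finset.mem_Icc.mpr ⟨?_, min_le_right _ _⟩
    refine min_le_min (add_le_add_left (Int.floor_le_floor ?_) 1) le_rfl
    have hm : min c B ≤ min x B := min_le_min hcx le_rfl
    gcongr
  -- a.e. nonnegativity of the harvested energy
  have hae : ∀ᵐ e ∂μ, (0 : ℝ) ≤ e := by
    rw [ae_iff]
    have h : {a : ℝ | ¬ (0 : ℝ) ≤ a} = Set.Iio 0 := by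
      ext a; simp
    rw [h]
    exact hμ
  -- integrability of all integrands appearing in the recursion
  have hInt : ∀ (c : ℝ) (F : ℝ → ℝ), Integrable (fun e => F (Quant (c + e))) μ := by
    intro c F
    have hg : Integrable (fun e => F (Quant (c + max e 0))) μ := by
      refine stmt15_integrable (f := fun e => Quant (c + max e 0))
        (hQmeas.comp (measurable_const.add (measurable_id.max measurable_const)))
        ((Finset.Icc (min (⌊(M : ℝ) * min c B / B⌋ + 1) (M : ℤ)) (M : ℤ)).image
          (fun n : ℤ => ((2 * n - 1 : ℤ) : ℝ) * B / (2 * M)))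
        (fun x => hQmem c _ (le_add_of_nonneg_right (le_max_right x 0))) F μ
    refine hg.congr ?_
    filter_upwards [hae] with e he
    rw [max_eq_left he]
  -- monotone comparison of integrals
  have hImono : ∀ (F : ℝ → ℝ), Antitone F → ∀ c1 c2 : ℝ, c1 ≤ c2 →
      (∫ e, F (Quant (c2 + e)) ∂μ) ≤ ∫ e, F (Quant (c1 + e)) ∂μ := by
    intro F hF c1 c2 hc
    exact integral_mono (hInt c2 F) (hInt c1 F) fun e => hF (hQmono (by linarith))
  -- basic facts about the cost function
  have hccost_nonneg : ∀ γ : ℝ, 0 < γ → 0 ≤ ccost γ := by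
    intro γ hγ
    rw [hccost]
    split_ifs
    · linarith
    · positivity
  have hccost_anti : ∀ γ' γ : ℝ, 0 < γ' → γ' ≤ γ → ccost γ ≤ ccost γ' := by
    intro γ' γ hγ' hle
    have hγ : 0 < γ := lt_of_lt_of_le hγ' hle
    have hdiv : CG / γ ≤ CG / γ' := by gcongr
    rw [hccost, hccost]
    split_ifs with h1 h2
    · exact le_rfl
    · linarith
    · have hκ2 : κ ≤ wD / (wG * τ) := hκ ▸ min_le_right _ _
      have h3 : CG / γ ≤ wD / (wG * τ) := le_trans (not_lt.1 h1) hκ2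
      have hwτ : (0 : ℝ) < wG * τ := by positivity
      have h4 := mul_le_mul_of_nonneg_left h3 hwτ.le
      have h5 : wG * τ * (wD / (wG * τ)) = wD := by field_simp
      linarith
    · exact mul_le_mul_of_nonneg_left hdiv (by positivity)
  -- feasibility is monotone in the energy level
  have hcondm : ∀ g ε1 ε2 : ℝ, ε1 ≤ ε2 → CH / g ≤ min (ε1 / τ) pHmax →
      CH / g ≤ min (ε2 / τ) pHmax := by
    intro g ε1 ε2 h hle
    refine hle.trans (min_le_min ?_ le_rfl)
    gcongr
  -- the optimal cost-to-go functions are antitone in the energy level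
  have hanti : ∀ j, 1 ≤ j → j ≤ N → ∀ gG gH : ℝ,
      Antitone fun ε => ustar j ε gG gH := by
    have key : ∀ d : ℕ, 1 ≤ N - d → ∀ gG gH : ℝ,
        Antitone fun ε => ustar (N - d) ε gG gH := by
      intro d
      induction d with
      | zero =>
        intro _ gG gH ε1 ε2 h
        simp only [Nat.sub_zero, hterm]
        by_cases hc1 : CH / gH ≤ min (ε1 / τ) pHmax
        · rw [if_pos hc1, if_pos (hcondm gH ε1 ε2 h hc1)]
        · by_cases hc2 : CH / gH ≤ min (ε2 / τ) pHmax
          · rw [if_pos hc2, if_neg hc1]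
            exact min_le_left _ _
          · rw [if_neg hc2, if_neg hc1]
      | succ d ih =>
        intro hd gG gH
        have hj1 : 1 ≤ N - (d + 1) := hd
        have hlt : N - (d + 1) < N := by omega
        have hsucc : N - (d + 1) + 1 = N - d := by omega
        have hdd : 1 ≤ N - d := by omega
        have hFanti : Antitone (uhat (ustar (N - d))) := by
          intro ε1 ε2 h
          rw [huhat, huhat]
          exact Finset.sum_le_sum fun kG _ =>
            Finset.sum_le_sum fun kH _ => ih hdd (H kG) (H kH) h
        intro ε1 ε2 h
        simp only [hbell (N - (d + 1)) hj1 hlt, hsucc]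
        have hA0 : (∫ e, uhat (ustar (N - d)) (Quant (ε2 - 0 * (CH / gH) * τ + e)) ∂μ)
            ≤ ∫ e, uhat (ustar (N - d)) (Quant (ε1 - 0 * (CH / gH) * τ + e)) ∂μ :=
          hImono (uhat (ustar (N - d))) hFanti _ _ (by linarith)
        have hA1 : (∫ e, uhat (ustar (N - d)) (Quant (ε2 - 1 * (CH / gH) * τ + e)) ∂μ)
            ≤ ∫ e, uhat (ustar (N - d)) (Quant (ε1 - 1 * (CH / gH) * τ + e)) ∂μ :=
          hImono (uhat (ustar (N - d))) hFanti _ _ (by linarith)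
        have hc : (0 : ℝ) ≤ ((K : ℝ) ^ 2)⁻¹ := by positivity
        have hA0' := mul_le_mul_of_nonneg_left hA0 hc
        have hA1' := mul_le_mul_of_nonneg_left hA1 hc
        by_cases hc1 : CH / gH ≤ min (ε1 / τ) pHmax
        · rw [if_pos hc1, if_pos (hcondm gH ε1 ε2 h hc1)]
          exact min_le_min (by linarith) (by linarith)
        · by_cases hc2 : CH / gH ≤ min (ε2 / τ) pHmax
          · rw [if_pos hc2, if_neg hc1]
            exact le_trans (min_le_left _ _) (by linarith)
          · rw [if_neg hc2, if_neg hc1]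
            linarith
    intro j hj1 hj2 gG gH
    have hj : j = N - (N - j) := by omega
    rw [hj]
    exact key (N - j) (by omega) gG gH
  -- main argument
  have hpos : ∀ x ∈ Set.range H, (0 : ℝ) < x := by
    rintro x ⟨k, rfl⟩
    exact hHpos k
  intro i hi1 hiN ε hε γG hγG γH hγH hfeas hopt γG' hγG' γH' hγH' hGle hHle
  have hγHpos : 0 < γH := hpos _ hγH
  have hγH'pos : 0 < γH' := hpos _ hγH'
  have hγG'pos : 0 < γG' := hpos _ hγG'
  have hdivH : CH / γH' ≤ CH / γH := by gcongr
  have hfeas' : CH / γH' ≤ min (ε / τ) pHmax := le_trans hdivH hfeas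
  refine ⟨hfeas', ?_⟩
  rw [hQi i hi1 hiN ε γG γH 1, hQi i hi1 hiN ε γG γH 0] at hopt
  rw [hQi i hi1 hiN ε γG' γH' 1, hQi i hi1 hiN ε γG' γH' 0]
  have hcc : ccost γG ≤ ccost γG' := hccost_anti γG' γG hγG'pos hGle
  by_cases hiNeq : i = N
  · simp only [if_pos hiNeq]
    have h0 := hccost_nonneg γG' hγG'pos
    nlinarith
  · simp only [if_neg hiNeq] at hopt ⊢
    have hiltN : i < N := lt_of_le_of_ne hiN hiNeq
    have hFanti : Antitone (uhat (ustar (i + 1))) := by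
      intro ε1 ε2 h
      rw [huhat, huhat]
      exact Finset.sum_le_sum fun kG _ =>
        Finset.sum_le_sum fun kH _ => hanti (i + 1) (by omega) (by omega) _ _ h
    have hτdiv := mul_le_mul_of_nonneg_right hdivH hτ.le
    have key1 : (∫ e, uhat (ustar (i + 1)) (Quant (ε - 1 * (CH / γH') * τ + e)) ∂μ)
        ≤ ∫ e, uhat (ustar (i + 1)) (Quant (ε - 1 * (CH / γH) * τ + e)) ∂μ :=
      hImono (uhat (ustar (i + 1))) hFanti _ _ (by nlinarith)
    have key2 : (∫ e, uhat (ustar (i + 1)) (Quant (ε - 0 * (CH / γH) * τ + e)) ∂μ)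
        = ∫ e, uhat (ustar (i + 1)) (Quant (ε - 0 * (CH / γH') * τ + e)) ∂μ := by
      norm_num
    have hc : (0 : ℝ) ≤ ((K : ℝ) ^ 2)⁻¹ := by positivity
    have k1 := mul_le_mul_of_nonneg_left key1 hc
    rw [key2] at hopt
    linarith
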